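/- Let J := diag(1, −1) as a 2×2 complex matrix. Let α be a real number with α ≥ 1 and β a complex number with α² − |β|² = 1. Then there exists a 2×2 complex matrix X with Xᴴ J X = J and det X = 1 such that X · Xᴴ = [[α, β], [conj(β), α]]. -/

import Mathlib

open Matrix

/-- Every boost `[[α, β], [conj β, α]]` with `α ≥ 1` and `α² − |β|² = 1` arises as
`X · Xᴴ` for some `X ∈ SU(1,1)`. -/
theorem stmt_10 (J : Matrix (Fin 2) (Fin 2) ℂ) (hJ : J = !![1, 0; 0, -1])
    (α : ℝ) (β : ℂ) (hα : 1 ≤ α) (h : α ^ 2 - ‖β‖ ^ 2 = 1) :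
    ∃ X : Matrix (Fin 2) (Fin 2) ℂ, Xᴴ * J * X = J ∧ X.det = 1 ∧
      X * Xᴴ = !![(α : ℂ), β; (starRingEnd ℂ) β, (α : ℂ)] := by
  set a : ℝ := Real.sqrt ((α + 1) / 2) with ha_def
  have ha_pos : 0 < a := Real.sqrt_pos.mpr (by linarith)
  have ha2 : a ^ 2 = (α + 1) / 2 := Real.sq_sqrt (by linarith)
  set b : ℂ := β / (2 * a) with hb_def
  have haC : (a : ℂ) ≠ 0 := by exact_mod_cast ha_pos.ne'
  -- key scalar facts
  have hab : 2 * (a : ℂ) * b = β := by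
    rw [hb_def]; field_simp
  have hab' : 2 * (a : ℂ) * (starRingEnd ℂ) b = (starRingEnd ℂ) β := by
    have := congrArg (starRingEnd ℂ) hab
    simpa [Complex.conj_ofReal, map_ofNat, mul_comm, mul_assoc, mul_left_comm] using this
  have hnsβ : Complex.normSq β = α ^ 2 - 1 := by
    rw [Complex.normSq_eq_norm_sq]; linarith
  have hnsb : Complex.normSq b = (α - 1) / 2 := by
    have h2a : (2 : ℂ) * (a : ℝ) = ((2 * a : ℝ) : ℂ) := by push_cast; ring
    rw [hb_def, h2a, Complex.normSq_div, Complex.normSq_ofReal, hnsβ]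
    have h4a : (2 * a) * (2 * a) = 2 * (α + 1) := by nlinarith [ha2]
    rw [h4a]
    field_simp
    ring
  have hbb : b * (starRingEnd ℂ) b = (((α - 1) / 2 : ℝ) : ℂ) := by
    rw [Complex.mul_conj, hnsb]
  have ha2C : (a : ℂ) ^ 2 = (((α + 1) / 2 : ℝ) : ℂ) := by
    exact_mod_cast congrArg (Complex.ofReal) ha2
  have e1 : (a : ℂ) ^ 2 - b * (starRingEnd ℂ) b = 1 := by
    rw [ha2C, hbb]; push_cast; ring
  have e2 : (a : ℂ) ^ 2 + b * (starRingEnd ℂ) b = (α : ℂ) := by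
    rw [ha2C, hbb]; push_cast; ring
  have hXH : (!![(a : ℂ), b; (starRingEnd ℂ) b, (a : ℂ)])ᴴ
      = !![(a : ℂ), b; (starRingEnd ℂ) b, (a : ℂ)] := by
    ext i j
    fin_cases i <;> fin_cases j <;>
      simp [conjTranspose_apply, Complex.conj_ofReal]
  refine ⟨!![(a : ℂ), b; (starRingEnd ℂ) b, (a : ℂ)], ?_, ?_, ?_⟩
  · rw [hJ, hXH, Matrix.mul_fin_two, Matrix.mul_fin_two]
    ext i j
    fin_cases i <;> fin_cases j <;> simp
    · linear_combination e1
    · ring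
    · ring
    · linear_combination -e1
  · rw [Matrix.det_fin_two_of]
    linear_combination e1
  · rw [hXH, Matrix.mul_fin_two]
    ext i j
    fin_cases i <;> fin_cases j <;> simp
    · linear_combination e2
    · linear_combination hab
    · linear_combination hab'
    · linear_combination e2
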